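/- (Corollary 2, part (i).) Let μ ∈ (0,1). Suppose ‖D‖ ≤ δ for a known δ > 0, and suppose there exist ε₁ ∈ ℝ, ε₂ ∈ ℝ, Y ∈ ℝ^{n×T}, and P = Pᵀ ∈ ℝ^{n×n} such that the block matrix [[−μP, 0, Y U_{0,T}ᵀ, Y X_{1,T}ᵀ, −δ Y V_{0,T}ᵀ], [0, −ε₁P, 0, 0, δε₁P], [U_{0,T} Yᵀ, 0, −ε₁I, 0, 0], [X_{1,T} Yᵀ, 0, 0, −P + ε₂I, 0], [−δ V_{0,T} Yᵀ, δε₁P, 0, 0, −ε₂I]] is negative definite and P = X_{0,T} Yᵀ. Set Q := P⁻¹, K := U_{0,T} Yᵀ (X_{0,T} Yᵀ)⁻¹, and f(x) := A x + B (K x) + D x (K x). Then the Lyapunov function V(x) := xᵀ Q x satisfies V(f(x)) < μ V(x) for all x ∈ ℰ_Q \ {0}, where ℰ_Q := {x ∈ ℝⁿ : xᵀ Q x ≤ 1}. -/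

import Mathlib

open Matrix
open scoped Matrix.Norms.L2Operator

/-- The data-based 5×5 block matrix with `(1,1)` block `−μP`, blocks of sizes
`[n, n, 1, n, n]`:
`[[−μP, 0, Y U₀ᵀ, Y X₁ᵀ, −δ Y V₀ᵀ], [0, −ε₁P, 0, 0, δε₁P], [U₀ Yᵀ, 0, −ε₁I, 0, 0],
[X₁ Yᵀ, 0, 0, −P + ε₂I, 0], [−δ V₀ Yᵀ, δε₁P, 0, 0, −ε₂I]]`. -/
def dataBlockMat5Mu {n T : ℕ} (μ : ℝ)
    (P : Matrix (Fin n) (Fin n) ℝ) (Y : Matrix (Fin n) (Fin T) ℝ)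
    (U₀ : Matrix (Fin 1) (Fin T) ℝ) (X₁ V₀ : Matrix (Fin n) (Fin T) ℝ)
    (δ ε₁ ε₂ : ℝ) :
    Matrix (((Fin n ⊕ Fin n) ⊕ (Fin 1 ⊕ Fin n)) ⊕ Fin n)
      (((Fin n ⊕ Fin n) ⊕ (Fin 1 ⊕ Fin n)) ⊕ Fin n) ℝ :=
  Matrix.fromBlocks
    (Matrix.fromBlocks
      (Matrix.fromBlocks (-(μ • P)) 0 0 (-(ε₁ • P)))
      (Matrix.fromBlocks (Y * U₀ᵀ) (Y * X₁ᵀ) 0 0)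
      (Matrix.fromBlocks (U₀ * Yᵀ) 0 (X₁ * Yᵀ) 0)
      (Matrix.fromBlocks (-(ε₁ • (1 : Matrix (Fin 1) (Fin 1) ℝ))) 0 0
        (-P + ε₂ • (1 : Matrix (Fin n) (Fin n) ℝ))))
    (Matrix.fromRows
      (Matrix.fromRows (-(δ • (Y * V₀ᵀ))) ((δ * ε₁) • P))
      (Matrix.fromRows (0 : Matrix (Fin 1) (Fin n) ℝ) (0 : Matrix (Fin n) (Fin n) ℝ)))
    (Matrix.fromCols
      (Matrix.fromCols (-(δ • (V₀ * Yᵀ))) ((δ * ε₁) • P))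
      (Matrix.fromCols (0 : Matrix (Fin n) (Fin 1) ℝ) (0 : Matrix (Fin n) (Fin n) ℝ)))
    (-(ε₂ • (1 : Matrix (Fin n) (Fin n) ℝ)))

/-- Bridge: quadratic-form entry equals a dot product. -/
lemma entryDotAux {n : ℕ} (M : Matrix (Fin n) (Fin n) ℝ) (a b : Matrix (Fin n) (Fin 1) ℝ) :
    (aᵀ * M * b) 0 0 = (fun i => a i 0) ⬝ᵥ (M *ᵥ fun i => b i 0) := by
  simp [Matrix.mul_apply, Matrix.mulVec, dotProduct, Finset.mul_sum, Finset.sum_mul]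
  rw [Finset.sum_comm]
  apply Finset.sum_congr rfl; intro i _; apply Finset.sum_congr rfl; intro j _; ring

/-- Bridge: column of a matrix product. -/
lemma colMulAux {n m : ℕ} (M : Matrix (Fin n) (Fin m) ℝ) (c : Matrix (Fin m) (Fin 1) ℝ) :
    (fun i => (M * c) i 0) = M *ᵥ (fun i => c i 0) := by
  funext i; simp [Matrix.mul_apply, Matrix.mulVec, dotProduct]

lemma dotTransAux {n m : ℕ} (M : Matrix (Fin n) (Fin m) ℝ) (u : Fin n → ℝ) (v : Fin m → ℝ) :
    u ⬝ᵥ (M *ᵥ v) = (Mᵀ *ᵥ u) ⬝ᵥ v := by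
  rw [Matrix.dotProduct_mulVec, ← Matrix.mulVec_transpose]

open scoped Matrix.Norms.L2Operator in
lemma opNormDotAux {n : ℕ} (D : Matrix (Fin n) (Fin n) ℝ) (w : Fin n → ℝ) :
    (D *ᵥ w) ⬝ᵥ (D *ᵥ w) ≤ ‖D‖^2 * (w ⬝ᵥ w) := by
  have h := D.l2_opNorm_mulVec ((EuclideanSpace.equiv (Fin n) ℝ).symm w)
  have hsq : ∀ v : Fin n → ℝ, ‖(EuclideanSpace.equiv (Fin n) ℝ).symm v‖^2 = v ⬝ᵥ v := by
    intro v
    rw [EuclideanSpace.norm_eq, Real.sq_sqrt (by positivity)]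
    simp [dotProduct, sq]
  have h2 : ‖(EuclideanSpace.equiv (Fin n) ℝ).symm (D *ᵥ w)‖^2
      ≤ (‖D‖ * ‖(EuclideanSpace.equiv (Fin n) ℝ).symm w‖)^2 := by
    apply pow_le_pow_left₀ (norm_nonneg _) _ 2
    simpa using h
  rw [hsq, mul_pow, hsq] at h2
  exact h2

lemma expand5Aux {n T : ℕ} (μ : ℝ)
    (P : Matrix (Fin n) (Fin n) ℝ) (Y : Matrix (Fin n) (Fin T) ℝ)
    (U₀ : Matrix (Fin 1) (Fin T) ℝ) (X₁ V₀ : Matrix (Fin n) (Fin T) ℝ)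
    (δ ε₁ ε₂ : ℝ) (z1 z2 : Fin n → ℝ) (z3 : Fin 1 → ℝ) (z4 z5 : Fin n → ℝ) :
    (Sum.elim (Sum.elim (Sum.elim z1 z2) (Sum.elim z3 z4)) z5) ⬝ᵥ
      (dataBlockMat5Mu μ P Y U₀ X₁ V₀ δ ε₁ ε₂ *ᵥ
        (Sum.elim (Sum.elim (Sum.elim z1 z2) (Sum.elim z3 z4)) z5))
    = -(μ * (z1 ⬝ᵥ (P *ᵥ z1))) - ε₁ * (z2 ⬝ᵥ (P *ᵥ z2))
      + z1 ⬝ᵥ ((Y * U₀ᵀ) *ᵥ z3) + z1 ⬝ᵥ ((Y * X₁ᵀ) *ᵥ z4)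
      - δ * (z1 ⬝ᵥ ((Y * V₀ᵀ) *ᵥ z5)) + (δ * ε₁) * (z2 ⬝ᵥ (P *ᵥ z5))
      + z3 ⬝ᵥ ((U₀ * Yᵀ) *ᵥ z1) + z4 ⬝ᵥ ((X₁ * Yᵀ) *ᵥ z1)
      - δ * (z5 ⬝ᵥ ((V₀ * Yᵀ) *ᵥ z1)) + (δ * ε₁) * (z5 ⬝ᵥ (P *ᵥ z2))
      - ε₁ * (z3 ⬝ᵥ z3) - z4 ⬝ᵥ (P *ᵥ z4) + ε₂ * (z4 ⬝ᵥ z4) - ε₂ * (z5 ⬝ᵥ z5) := by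
  simp [dataBlockMat5Mu, Matrix.fromBlocks_mulVec, sumElim_dotProduct_sumElim,
    Matrix.add_mulVec, Matrix.neg_mulVec, Matrix.smul_mulVec,
    dotProduct_add, dotProduct_neg, dotProduct_smul, smul_eq_mul]
  ring

/-- Corollary 2, part (i): with the `(1,1)` block of the data-based LMI replaced
by `−μP`, the Lyapunov function satisfies `V(f(x)) < μ V(x)` on `ℰ_Q \ {0}`. -/
theorem data_based_exponential_decrease {n T : ℕ} (hn : 0 < n) (hT : 0 < T)
    (μ : ℝ) (hμ : μ ∈ Set.Ioo (0 : ℝ) 1)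
    (A : Matrix (Fin n) (Fin n) ℝ) (B : Matrix (Fin n) (Fin 1) ℝ)
    (D : Matrix (Fin n) (Fin n) ℝ)
    (δ : ℝ) (hδ : 0 < δ) (hD : ‖D‖ ≤ δ)
    (u : ℕ → ℝ) (x : ℕ → Matrix (Fin n) (Fin 1) ℝ)
    (hdyn : ∀ t < T, x (t + 1) = A * x t + u t • B + u t • (D * x t))
    (U₀ : Matrix (Fin 1) (Fin T) ℝ)
    (hU₀ : U₀ = Matrix.of fun (_ : Fin 1) (t : Fin T) => u t)
    (X₀ : Matrix (Fin n) (Fin T) ℝ)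
    (hX₀ : X₀ = Matrix.of fun (i : Fin n) (t : Fin T) => x t i 0)
    (X₁ : Matrix (Fin n) (Fin T) ℝ)
    (hX₁ : X₁ = Matrix.of fun (i : Fin n) (t : Fin T) => x (t + 1) i 0)
    (V₀ : Matrix (Fin n) (Fin T) ℝ)
    (hV₀ : V₀ = Matrix.of fun (i : Fin n) (t : Fin T) => x t i 0 * u t)
    (ε₁ ε₂ : ℝ) (Y : Matrix (Fin n) (Fin T) ℝ)
    (P : Matrix (Fin n) (Fin n) ℝ) (hPsym : P = Pᵀ)
    (hblock : (-(dataBlockMat5Mu μ P Y U₀ X₁ V₀ δ ε₁ ε₂)).PosDef)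
    (hP : P = X₀ * Yᵀ)
    (Q : Matrix (Fin n) (Fin n) ℝ) (hQ : Q = P⁻¹)
    (K : Matrix (Fin 1) (Fin n) ℝ) (hK : K = U₀ * Yᵀ * (X₀ * Yᵀ)⁻¹)
    (f : Matrix (Fin n) (Fin 1) ℝ → Matrix (Fin n) (Fin 1) ℝ)
    (hf : ∀ y : Matrix (Fin n) (Fin 1) ℝ, f y = A * y + B * (K * y) + D * y * (K * y))
    (V : Matrix (Fin n) (Fin 1) ℝ → ℝ)
    (hV : ∀ y : Matrix (Fin n) (Fin 1) ℝ, V y = (yᵀ * Q * y) 0 0) :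
    ∀ y : Matrix (Fin n) (Fin 1) ℝ, (yᵀ * Q * y) 0 0 ≤ 1 → y ≠ 0 →
      V (f y) < μ * V y := by
  obtain ⟨hμ0, hμ1⟩ := hμ
  -- generic consequence of the block LMI
  have key : ∀ (z1 z2 : Fin n → ℝ) (z3 : Fin 1 → ℝ) (z4 z5 : Fin n → ℝ),
      Sum.elim (Sum.elim (Sum.elim z1 z2) (Sum.elim z3 z4)) z5 ≠ 0 →
      0 < -(-(μ * (z1 ⬝ᵥ (P *ᵥ z1))) - ε₁ * (z2 ⬝ᵥ (P *ᵥ z2))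
      + z1 ⬝ᵥ ((Y * U₀ᵀ) *ᵥ z3) + z1 ⬝ᵥ ((Y * X₁ᵀ) *ᵥ z4)
      - δ * (z1 ⬝ᵥ ((Y * V₀ᵀ) *ᵥ z5)) + (δ * ε₁) * (z2 ⬝ᵥ (P *ᵥ z5))
      + z3 ⬝ᵥ ((U₀ * Yᵀ) *ᵥ z1) + z4 ⬝ᵥ ((X₁ * Yᵀ) *ᵥ z1)
      - δ * (z5 ⬝ᵥ ((V₀ * Yᵀ) *ᵥ z1)) + (δ * ε₁) * (z5 ⬝ᵥ (P *ᵥ z2))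
      - ε₁ * (z3 ⬝ᵥ z3) - z4 ⬝ᵥ (P *ᵥ z4) + ε₂ * (z4 ⬝ᵥ z4) - ε₂ * (z5 ⬝ᵥ z5)) := by
    intro z1 z2 z3 z4 z5 hz
    have h : 0 < (Sum.elim (Sum.elim (Sum.elim z1 z2) (Sum.elim z3 z4)) z5) ⬝ᵥ
        ((-(dataBlockMat5Mu μ P Y U₀ X₁ V₀ δ ε₁ ε₂)) *ᵥ
          (Sum.elim (Sum.elim (Sum.elim z1 z2) (Sum.elim z3 z4)) z5)) := by
      simpa using hblock.dotProduct_mulVec_pos hz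
    rwa [Matrix.neg_mulVec, dotProduct_neg, expand5Aux] at h
  -- positivity of ε₁
  have hε₁ : 0 < ε₁ := by
    have h := key 0 0 (fun _ => 1) 0 0 (by
      intro h0
      have := congrFun h0 (Sum.inl (Sum.inr (Sum.inl 0)))
      simpa using this)
    simpa [dotProduct] using h
  -- positivity of ε₂
  have hε₂ : 0 < ε₂ := by
    have h := key 0 0 0 0 (fun _ => 1) (by
      intro h0
      have := congrFun h0 (Sum.inr ⟨0, hn⟩)
      simpa using this)
    have h' : 0 < ε₂ * ((fun _ : Fin n => (1:ℝ)) ⬝ᵥ (fun _ => 1)) := by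
      simpa using h
    have hpos : (0:ℝ) < (fun _ : Fin n => (1:ℝ)) ⬝ᵥ (fun _ => 1) := by
      simp [dotProduct]
      exact_mod_cast hn
    nlinarith
  -- P is positive definite
  have hPpd : P.PosDef := by
    refine Matrix.posDef_iff_dotProduct_mulVec.mpr ⟨?_, ?_⟩
    · have : Pᴴ = Pᵀ := by ext i j; simp [Matrix.conjTranspose_apply]
      rw [Matrix.IsHermitian, this, ← hPsym]
    · intro v hv
      have h := key v 0 0 0 0 (by
        intro h0
        apply hv
        funext i
        exact congrFun h0 (Sum.inl (Sum.inl (Sum.inl i))))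
      have h' : 0 < μ * (v ⬝ᵥ (P *ᵥ v)) := by simpa using h
      have hvp : 0 < v ⬝ᵥ (P *ᵥ v) := by nlinarith
      simpa using hvp
  have hPQ : P * Q = 1 := by
    rw [hQ]; exact Matrix.mul_nonsing_inv P (isUnit_iff_isUnit_det _ |>.1 hPpd.isUnit)
  have hQP : Q * P = 1 := by
    rw [hQ]; exact Matrix.nonsing_inv_mul P (isUnit_iff_isUnit_det _ |>.1 hPpd.isUnit)
  -- data consistency
  have hdata : X₁ = A * X₀ + B * U₀ + D * V₀ := by
    subst hU₀ hX₀ hX₁ hV₀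
    ext i t
    have h2 := congrFun (congrFun (hdyn t t.isLt) i) 0
    simp only [Matrix.add_apply, Matrix.smul_apply, Matrix.mul_apply, smul_eq_mul] at h2 ⊢
    simp only [Matrix.of_apply]
    rw [h2, Fin.sum_univ_one, Finset.mul_sum]
    have e : ∀ j, D i j * (x (↑t) j 0 * u ↑t) = u ↑t * (D i j * x (↑t) j 0) := by
      intro j; ring
    simp_rw [e]
    ring
  -- closed-loop identity
  have hK' : K = U₀ * Yᵀ * Q := by rw [hK, ← hP, ← hQ]
  have hX0R : X₀ * (Yᵀ * Q) = 1 := by rw [← Matrix.mul_assoc, ← hP, hPQ]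
  have hclosed : X₁ * (Yᵀ * Q) = A + B * K + D * (V₀ * (Yᵀ * Q)) := by
    rw [hdata, Matrix.add_mul, Matrix.add_mul, Matrix.mul_assoc A, hX0R, Matrix.mul_one,
      Matrix.mul_assoc B, Matrix.mul_assoc D, hK', Matrix.mul_assoc]
  intro y hq1 hy0
  set a : Fin n → ℝ := fun i => y i 0 with ha
  set s : ℝ := (K * y) 0 0 with hs
  set xp : Fin n → ℝ := fun i => f y i 0 with hxpdef
  set N : Matrix (Fin n) (Fin n) ℝ := V₀ * (Yᵀ * Q) with hN
  set w : Fin n → ℝ := s • a - N *ᵥ a with hwdef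
  -- K *ᵥ a
  have hKa : K *ᵥ a = fun _ => s := by
    funext j
    have : j = 0 := Subsingleton.elim _ _
    subst this
    simp [Matrix.mulVec, dotProduct, Matrix.mul_apply, hs, ha]
  -- xp in vector form
  have hxp : xp = A *ᵥ a + B *ᵥ (K *ᵥ a) + s • (D *ᵥ a) := by
    funext i
    have := congrFun (congrFun (hf y) i) 0
    simp only [hxpdef, this, Matrix.add_apply, Pi.add_apply, Pi.smul_apply, smul_eq_mul]
    rw [hKa]
    simp only [Matrix.mul_apply, Matrix.mulVec, dotProduct, Fin.sum_univ_one, ha]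
    rw [Finset.sum_mul]
    have hs' : (∑ j, K 0 j * y j 0) = s := by
      rw [hs]; simp [Matrix.mul_apply]
    rw [hs', ← Finset.sum_mul]
    ring
  set z1 : Fin n → ℝ := Q *ᵥ a with hz1
  set z4 : Fin n → ℝ := Q *ᵥ xp with hz4
  set dw : Fin n → ℝ := D *ᵥ w with hdw
  have hPz1 : P *ᵥ z1 = a := by
    rw [hz1, Matrix.mulVec_mulVec, hPQ, Matrix.one_mulVec]
  have hPz4 : P *ᵥ z4 = xp := by
    rw [hz4, Matrix.mulVec_mulVec, hPQ, Matrix.one_mulVec]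
  have hv : (X₁ * Yᵀ) *ᵥ z1 = xp - dw := by
    rw [hz1, Matrix.mulVec_mulVec, Matrix.mul_assoc, hclosed, hdw, hwdef, hxp,
      Matrix.add_mulVec, Matrix.add_mulVec, Matrix.mulVec_sub, Matrix.mulVec_smul,
      ← Matrix.mulVec_mulVec a B K, ← Matrix.mulVec_mulVec a D N]
    abel
  have hUz1 : (U₀ * Yᵀ) *ᵥ z1 = fun _ => s := by
    rw [hz1, Matrix.mulVec_mulVec, ← hK', hKa]
  have hVz1 : (V₀ * Yᵀ) *ᵥ z1 = N *ᵥ a := by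
    rw [hz1, Matrix.mulVec_mulVec, hN, Matrix.mul_assoc]
  have hz1ne : z1 ≠ 0 := by
    intro h0
    apply hy0
    have haz : a = 0 := by rw [← hPz1, h0, Matrix.mulVec_zero]
    ext i j
    have hj : j = 0 := Subsingleton.elim _ _
    subst hj
    simpa [ha] using congrFun haz i
  have hzne : Sum.elim (Sum.elim (Sum.elim z1 ((s/ε₁) • z1))
      (Sum.elim (fun _ : Fin 1 => s/ε₁) z4)) ((δ/ε₂) • w) ≠ 0 := by
    intro h0
    apply hz1ne
    funext i
    exact congrFun h0 (Sum.inl (Sum.inl (Sum.inl i)))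
  have h := key z1 ((s/ε₁) • z1) (fun _ => s/ε₁) z4 ((δ/ε₂) • w) hzne
  -- rewrite each term of h into scalar form
  have e1 : z1 ⬝ᵥ (P *ᵥ z1) = a ⬝ᵥ z1 := by rw [hPz1, dotProduct_comm]
  have e2 : ((s/ε₁) • z1) ⬝ᵥ (P *ᵥ ((s/ε₁) • z1)) = (s/ε₁) * ((s/ε₁) * (a ⬝ᵥ z1)) := by
    rw [Matrix.mulVec_smul, hPz1, smul_dotProduct, dotProduct_smul, smul_eq_mul, smul_eq_mul,
      dotProduct_comm]
  have e3 : z1 ⬝ᵥ ((Y * U₀ᵀ) *ᵥ (fun _ : Fin 1 => s/ε₁)) = s * (s/ε₁) := by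
    rw [dotTransAux, Matrix.transpose_mul, Matrix.transpose_transpose, hUz1]
    simp [dotProduct]
  have e4 : z1 ⬝ᵥ ((Y * X₁ᵀ) *ᵥ z4) = xp ⬝ᵥ z4 - dw ⬝ᵥ z4 := by
    rw [dotTransAux, Matrix.transpose_mul, Matrix.transpose_transpose, hv, sub_dotProduct]
  have e5 : z1 ⬝ᵥ ((Y * V₀ᵀ) *ᵥ ((δ/ε₂) • w)) = (δ/ε₂) * ((N *ᵥ a) ⬝ᵥ w) := by
    rw [Matrix.mulVec_smul, dotProduct_smul, smul_eq_mul, dotTransAux, Matrix.transpose_mul,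
      Matrix.transpose_transpose, hVz1]
  have e6 : ((s/ε₁) • z1) ⬝ᵥ (P *ᵥ ((δ/ε₂) • w)) = (s/ε₁) * ((δ/ε₂) * (a ⬝ᵥ w)) := by
    rw [Matrix.mulVec_smul, smul_dotProduct, dotProduct_smul, smul_eq_mul, smul_eq_mul,
      dotTransAux, ← hPsym, hPz1]
  have e7 : (fun _ : Fin 1 => s/ε₁) ⬝ᵥ ((U₀ * Yᵀ) *ᵥ z1) = (s/ε₁) * s := by
    rw [hUz1]; simp [dotProduct]
  have e8 : z4 ⬝ᵥ ((X₁ * Yᵀ) *ᵥ z1) = xp ⬝ᵥ z4 - dw ⬝ᵥ z4 := by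
    rw [hv, dotProduct_sub, dotProduct_comm z4 xp, dotProduct_comm z4 dw]
  have e9 : ((δ/ε₂) • w) ⬝ᵥ ((V₀ * Yᵀ) *ᵥ z1) = (δ/ε₂) * ((N *ᵥ a) ⬝ᵥ w) := by
    rw [hVz1, smul_dotProduct, smul_eq_mul, dotProduct_comm]
  have e10 : ((δ/ε₂) • w) ⬝ᵥ (P *ᵥ ((s/ε₁) • z1)) = (δ/ε₂) * ((s/ε₁) * (a ⬝ᵥ w)) := by
    rw [Matrix.mulVec_smul, hPz1, smul_dotProduct, dotProduct_smul, smul_eq_mul, smul_eq_mul,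
      dotProduct_comm]
  have e11 : (fun _ : Fin 1 => s/ε₁) ⬝ᵥ (fun _ : Fin 1 => s/ε₁) = (s/ε₁) * (s/ε₁) := by
    simp [dotProduct]
  have e12 : z4 ⬝ᵥ (P *ᵥ z4) = xp ⬝ᵥ z4 := by rw [hPz4, dotProduct_comm]
  have e14 : ((δ/ε₂) • w) ⬝ᵥ ((δ/ε₂) • w) = (δ/ε₂) * ((δ/ε₂) * (w ⬝ᵥ w)) := by
    rw [smul_dotProduct, dotProduct_smul, smul_eq_mul, smul_eq_mul]
  rw [e1, e2, e3, e4, e5, e6, e7, e8, e9, e10, e11, e12, e14] at h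
  -- abbreviate scalars
  set q : ℝ := a ⬝ᵥ z1 with hqdef
  set p2 : ℝ := xp ⬝ᵥ z4 with hp2def
  set dz : ℝ := dw ⬝ᵥ z4 with hdzdef
  set ww : ℝ := w ⬝ᵥ w with hwwdef
  set aw : ℝ := a ⬝ᵥ w with hawdef
  set naw : ℝ := (N *ᵥ a) ⬝ᵥ w with hnawdef
  set nb : ℝ := z4 ⬝ᵥ z4 with hnbdef
  set σ : ℝ := s/ε₁ with hσdef
  set τ : ℝ := δ/ε₂ with hτdef
  have hσ : ε₁ * σ = s := by rw [hσdef]; field_simp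
  have hτ : ε₂ * τ = δ := by rw [hτdef]; field_simp
  rw [← hσ, ← hτ] at h
  -- supplementary scalar facts
  have hwvec : ww = ε₁ * σ * aw - naw := by
    rw [hwwdef, hawdef, hnawdef]
    conv_lhs => rw [hwdef]
    rw [sub_dotProduct, smul_dotProduct, smul_eq_mul, hσ]
  have hnaw : naw = ε₁ * σ * aw - ww := by linarith
  rw [hnaw] at h
  have hsq : 0 ≤ ε₂^2 * nb - 2 * (ε₂ * dz) + dw ⬝ᵥ dw := by
    have h0 : 0 ≤ (ε₂ • z4 - dw) ⬝ᵥ (ε₂ • z4 - dw) :=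
      Finset.sum_nonneg fun i _ => mul_self_nonneg _
    have he : (ε₂ • z4 - dw) ⬝ᵥ (ε₂ • z4 - dw)
        = ε₂^2 * nb - 2 * (ε₂ * dz) + dw ⬝ᵥ dw := by
      rw [hnbdef, hdzdef]
      simp only [sub_dotProduct, dotProduct_sub, smul_dotProduct, dotProduct_smul, smul_eq_mul]
      rw [dotProduct_comm z4 dw]
      ring
    linarith only [he ▸ h0]
  have hwwpos : 0 ≤ ww := by
    rw [hwwdef]; exact Finset.sum_nonneg fun i _ => mul_self_nonneg _
  have hdwb : dw ⬝ᵥ dw ≤ (ε₂ * τ)^2 * ww := by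
    rw [hdw, hwwdef, hτ]
    calc (D *ᵥ w) ⬝ᵥ (D *ᵥ w) ≤ ‖D‖^2 * (w ⬝ᵥ w) := opNormDotAux D w
      _ ≤ δ^2 * (w ⬝ᵥ w) := by
          apply mul_le_mul_of_nonneg_right _ (Finset.sum_nonneg fun i _ => mul_self_nonneg _)
          exact pow_le_pow_left₀ (norm_nonneg _) hD 2
  have h2 : 2 * dz ≤ ε₂ * nb + ε₂ * τ^2 * ww := by
    have hc : ε₂ * (2 * dz) ≤ ε₂ * (ε₂ * nb + ε₂ * τ^2 * ww) := by
      linarith only [hsq, hdwb]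
    exact le_of_mul_le_mul_left hc hε₂
  -- the hypothesis q ≤ 1
  have hq1' : q ≤ 1 := by
    rw [entryDotAux] at hq1
    rw [hqdef, hz1, ha]
    exact hq1
  have h1 : 0 ≤ ε₁ * σ^2 * (1 - q) :=
    mul_nonneg (mul_nonneg hε₁.le (sq_nonneg σ)) (by linarith only [hq1'])
  -- convert the goal
  rw [hV, hV, entryDotAux, entryDotAux]
  rw [← hxpdef, ← ha, ← hz4, ← hz1, ← hp2def, ← hqdef]
  linarith only [h, h1, h2]
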